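/- The tetrahedron index satisfies, for all integers $m$ and $e$, the recursion $q^{e/2} I_\Delta(m-1,e) + q^{-m/2} I_\Delta(m,e-1) - I_\Delta(m,e) = 0$. The proof follows from the termwise identity: with $S(m,e,n) = (-1)^n q^{n(n+1)/2 - (n+e/2)m}/((q)_n (q)_{n+e})$, one has $q^{e/2} S(m-1,e,n) + q^{-m/2} S(m,e-1,n) - S(m,e,n) = 0$ for all $n$. -/

import Mathlib

/- We work with the formal variable `t = q^(1/2)`, so that `q = t^2` and
elements of `ℤ((q^(1/2)))` are described by their coefficient functions `ℤ → ℤ`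
(coefficient of `t^k`).  The `q`-Pochhammer symbol `(q)_n = ∏_{i=1}^n (1-q^i)`
is a power series in `t` with constant term `1`, hence invertible. -/

/-- `(q)_n = ∏_{i=1}^n (1 - q^i)` as a power series in `t` with `q = t^2`. -/
noncomputable def qPoch (n : ℕ) : PowerSeries ℤ :=
  ∏ i ∈ Finset.range n, (1 - (PowerSeries.X : PowerSeries ℤ) ^ (2 * (i + 1)))

/-- The inverse `1/(q)_n` (the constant term of `(q)_n` is `1`). -/
noncomputable def qPochInv (n : ℕ) : PowerSeries ℤ :=
  PowerSeries.invOfUnit (qPoch n) 1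

/-- Coefficient of `t^k` in a power series in `t` (zero for negative `k`). -/
noncomputable def coeffZ (k : ℤ) (f : PowerSeries ℤ) : ℤ :=
  if 0 ≤ k then PowerSeries.coeff k.toNat f else 0

/-- Coefficient of `t^k` in the summand
`S(m,e,n) = (-1)^n q^{n(n+1)/2 - (n+e/2)m} / ((q)_n (q)_{n+e})`
of the tetrahedron index, with the convention `1/(q)_n = 0` for `n < 0`.
(In `t`-units the exponent is `n(n+1) - (2n+e)m`.) -/
noncomputable def Scoeff (m e : ℤ) (n : ℕ) (k : ℤ) : ℤ :=
  if 0 ≤ (n : ℤ) + e then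
    (-1) ^ n *
      coeffZ (k - ((n : ℤ) * (n + 1) - (2 * n + e) * m))
        (qPochInv n * qPochInv ((n : ℤ) + e).toNat)
  else 0

/-- Coefficient of `t^k` in the tetrahedron index `I_Δ(m,e)`; for fixed `k`
only finitely many `n` contribute, so the `finsum` is the honest sum. -/
noncomputable def Icoeff (m e : ℤ) (k : ℤ) : ℤ :=
  ∑ᶠ n : ℕ, Scoeff m e n k

lemma constantCoeff_qPoch (n : ℕ) : PowerSeries.constantCoeff (qPoch n) = 1 := by
  simp [qPoch]

lemma qPoch_mul_inv (n : ℕ) : qPoch n * qPochInv n = 1 :=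
  PowerSeries.mul_invOfUnit _ _ (by simp [constantCoeff_qPoch])

lemma qPoch_ne_zero (n : ℕ) : qPoch n ≠ 0 := by
  intro h
  have := constantCoeff_qPoch n
  rw [h] at this
  simp at this

lemma qPochInv_succ (b : ℕ) :
    qPochInv b = (1 - PowerSeries.X ^ (2 * (b + 1))) * qPochInv (b + 1) := by
  apply mul_left_cancel₀ (qPoch_ne_zero (b + 1))
  have hp : qPoch (b + 1) = qPoch b * (1 - PowerSeries.X ^ (2 * (b + 1))) :=
    Finset.prod_range_succ _ _
  calc qPoch (b+1) * qPochInv b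
      = (1 - PowerSeries.X ^ (2*(b+1))) * (qPoch b * qPochInv b) := by rw [hp]; ring
    _ = (1 - PowerSeries.X ^ (2*(b+1))) := by rw [qPoch_mul_inv]; ring
    _ = (qPoch (b+1) * qPochInv (b+1)) * (1 - PowerSeries.X ^ (2*(b+1))) := by
          rw [qPoch_mul_inv]; ring
    _ = qPoch (b+1) * ((1 - PowerSeries.X ^ (2*(b+1))) * qPochInv (b+1)) := by ring

lemma coeffZ_sub (k : ℤ) (f g : PowerSeries ℤ) :
    coeffZ k (f - g) = coeffZ k f - coeffZ k g := by
  unfold coeffZ; split <;> simp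

lemma coeffZ_X_pow_mul (d : ℕ) (k : ℤ) (f : PowerSeries ℤ) :
    coeffZ k (PowerSeries.X ^ d * f) = coeffZ (k - d) f := by
  unfold coeffZ
  by_cases h1 : 0 ≤ k - (d : ℤ)
  · have h2 : 0 ≤ k := by omega
    rw [if_pos h1, if_pos h2]
    have : k.toNat = (k - d).toNat + d := by omega
    rw [this, PowerSeries.coeff_X_pow_mul]
  · rw [if_neg h1]
    by_cases h2 : 0 ≤ k
    · rw [if_pos h2]
      have hd : k.toNat < d := by omega
      have hdvd : (PowerSeries.X : PowerSeries ℤ) ^ d ∣ PowerSeries.X ^ d * f :=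
        Dvd.intro f rfl
      exact (PowerSeries.X_pow_dvd_iff.mp hdvd) k.toNat hd
    · rw [if_neg h2]

lemma coeffZ_neg_arg (k : ℤ) (hk : k < 0) (f : PowerSeries ℤ) : coeffZ k f = 0 := by
  unfold coeffZ; rw [if_neg (by omega)]

lemma Scoeff_term (m e : ℤ) (n : ℕ) (k : ℤ) :
    Scoeff (m - 1) e n (k - e) + Scoeff m (e - 1) n (k + m) - Scoeff m e n k = 0 := by
  rcases lt_trichotomy ((n : ℤ) + e) 0 with h | h | h
  · unfold Scoeff
    rw [if_neg (by omega), if_neg (by omega), if_neg (by omega)]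
    ring
  · -- n + e = 0
    unfold Scoeff
    rw [if_pos (by omega), if_neg (by omega), if_pos (by omega)]
    have harg : (k - e) - ((n : ℤ) * (n + 1) - (2 * n + e) * (m - 1))
        = k - ((n : ℤ) * (n + 1) - (2 * n + e) * m) := by linear_combination (-2 : ℤ) * h
    rw [harg]
    ring
  · -- n + e > 0
    obtain ⟨b, hb⟩ : ∃ b : ℕ, (n : ℤ) + e = b + 1 := ⟨((n : ℤ) + e).toNat - 1, by omega⟩
    have ht1 : ((n : ℤ) + e).toNat = b + 1 := by omega
    have ht2 : ((n : ℤ) + (e - 1)).toNat = b := by omega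
    unfold Scoeff
    rw [if_pos (by omega), if_pos (by omega), if_pos (by omega), ht1, ht2]
    set j := k - ((n : ℤ) * (n + 1) - (2 * n + e) * m) with hj
    have harg1 : (k - e) - ((n : ℤ) * (n + 1) - (2 * n + e) * (m - 1))
        = j - (2 * (b + 1) : ℕ) := by
      push_cast
      linear_combination (-2 : ℤ) * hb
    have harg2 : (k + m) - ((n : ℤ) * (n + 1) - (2 * n + (e - 1)) * m) = j := by ring
    rw [harg1, harg2]
    have hsplit : qPochInv n * qPochInv b
        = qPochInv n * qPochInv (b + 1)
          - PowerSeries.X ^ (2 * (b + 1)) * (qPochInv n * qPochInv (b + 1)) := by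
      rw [qPochInv_succ b]; ring
    rw [hsplit, coeffZ_sub, coeffZ_X_pow_mul]
    ring

lemma Scoeff_eq_zero (m e k : ℤ) (n : ℕ)
    (h : k.natAbs + (e * m).natAbs + 2 * m.natAbs + 1 ≤ n) :
    Scoeff m e n k = 0 := by
  have h' : (k.natAbs + (e * m).natAbs + 2 * m.natAbs + 1 : ℤ) ≤ n := by exact_mod_cast h
  unfold Scoeff
  split
  · rw [coeffZ_neg_arg, mul_zero]
    have h1 : k ≤ (k.natAbs : ℤ) := Int.le_natAbs
    have h2 : e * m ≤ ((e * m).natAbs : ℤ) := Int.le_natAbs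
    have h3 : m ≤ (m.natAbs : ℤ) := Int.le_natAbs
    have h4 : -m ≤ (m.natAbs : ℤ) := by
      have := Int.natAbs_neg m ▸ (Int.le_natAbs (a := -m)); omega
    have h0 : (0 : ℤ) ≤ k.natAbs + (e*m).natAbs := by positivity
    nlinarith [sq_nonneg ((n : ℤ) - 2 * m.natAbs), h'] 
  · rfl

noncomputable def Nbound (m e k : ℤ) : ℕ :=
  k.natAbs + (e * m).natAbs + 2 * m.natAbs + 1

lemma Scoeff_support (m e k : ℤ) :
    Function.support (fun n => Scoeff m e n k) ⊆ ↑(Finset.range (Nbound m e k)) := by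
  intro n hn
  simp only [Function.mem_support] at hn
  simp only [Finset.coe_range, Set.mem_Iio]
  by_contra hc
  exact hn (Scoeff_eq_zero m e k n (by unfold Nbound at hc; omega))

lemma Icoeff_eq_sum (m e k : ℤ) (N : ℕ) (hN : Nbound m e k ≤ N) :
    Icoeff m e k = ∑ n ∈ Finset.range N, Scoeff m e n k := by
  apply finsum_eq_finset_sum_of_support_subset
  exact (Scoeff_support m e k).trans (by simpa using Finset.range_subset_range.mpr hN)

/-- The tetrahedron index satisfies
`q^{e/2} I_Δ(m-1,e) + q^{-m/2} I_Δ(m,e-1) - I_Δ(m,e) = 0`,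
and this follows from the corresponding termwise identity for the summands
`S(m,e,n)`.  Both are stated coefficientwise in `t = q^{1/2}`
(multiplication by `q^{e/2} = t^e` shifts the coefficient index by `e`). -/
theorem tetrahedron_index_rec_two (m e : ℤ) :
    (∀ (n : ℕ) (k : ℤ),
      Scoeff (m - 1) e n (k - e) + Scoeff m (e - 1) n (k + m) - Scoeff m e n k = 0) ∧
    (∀ k : ℤ,
      Icoeff (m - 1) e (k - e) + Icoeff m (e - 1) (k + m) - Icoeff m e k = 0) := by
  refine ⟨fun n k => Scoeff_term m e n k, fun k => ?_⟩
  set N := max (Nbound (m-1) e (k-e)) (max (Nbound m (e-1) (k+m)) (Nbound m e k)) with hN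
  rw [Icoeff_eq_sum (m-1) e (k-e) N (le_max_left _ _),
      Icoeff_eq_sum m (e-1) (k+m) N (le_trans (le_max_left _ _) (le_max_right _ _)),
      Icoeff_eq_sum m e k N (le_trans (le_max_right _ _) (le_max_right _ _)),
      ← Finset.sum_add_distrib, ← Finset.sum_sub_distrib]
  exact Finset.sum_eq_zero fun n _ => Scoeff_term m e n k
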